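/- Let k ≥ 1, let n ≥ 2, let ζ ∈ ℂ be a primitive (2n)-th root of unity, let ℓ ∈ {0, n}, and let ε ∈ {1, −1}. Let W be the subspace {v : I_k → ℂ | D(k,ζ).mulVec v = ζ^ℓ • v and P_k.mulVec v = (ε · i^((ℓ : ℤ) − k)) • v} (i = Complex.I, integer power). Then 2 · (the ℂ-dimension of W) = Σ_{0 ≤ b ≤ k, (k : ℤ) − 2b ≡ ℓ (mod 2n)} C(k,b). (For ε = 1 and ε = −1 these are the dimensions of the irreducible Z_k(D_n)-modules Z_k^{(ℓ)} and Z_k^{(ℓ′)} labeled by the one-dimensional D_n-modules D_n^{(ℓ)} and D_n^{(ℓ′)}, each equal to half the corresponding D(k,ζ)-eigenspace dimension.) -/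

import Mathlib

open Matrix

/-- The number of `-1` factors (encoded as `true`) in a simple tensor index. -/
def wt {k : ℕ} (r : Fin k → Bool) : ℕ := (Finset.univ.filter fun i => r i = true).card

/-- The sign-reversal `-r` of an index, `(−r) i = ¬ (r i)`. -/
def negt {k : ℕ} (r : Fin k → Bool) : Fin k → Bool := fun i => !(r i)

/-- The matrix of `g^{⊗k}` on `V^{⊗k}` for `g = diag(ζ⁻¹, ζ)`. -/
noncomputable def Dmat (k : ℕ) (ζ : ℂ) : Matrix (Fin k → Bool) (Fin k → Bool) ℂ :=
  Matrix.diagonal fun r => ζ ^ ((k : ℤ) - 2 * (wt r : ℤ))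

/-- The 0–1 matrix with `P r s = 1` iff `s = −r`. -/
noncomputable def Pmat (k : ℕ) : Matrix (Fin k → Bool) (Fin k → Bool) ℂ :=
  Matrix.of fun r s => if s = negt r then 1 else 0

/-- The eigenspace `{v | M.mulVec v = μ • v}` as a submodule of `I → ℂ`. -/
noncomputable def eigSub {I : Type*} [Fintype I] (M : Matrix I I ℂ) (μ : ℂ) :
    Submodule ℂ (I → ℂ) where
  carrier := {v | M.mulVec v = μ • v}
  add_mem' := by
    intro a b ha hb
    simp only [Set.mem_setOf_eq] at *
    rw [Matrix.mulVec_add, ha, hb, smul_add]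
  zero_mem' := by
    simp only [Set.mem_setOf_eq, Matrix.mulVec_zero, smul_zero]
  smul_mem' := by
    intro c v hv
    simp only [Set.mem_setOf_eq] at *
    rw [Matrix.mulVec_smul, hv, smul_comm]

lemma negt_negt {k : ℕ} (r : Fin k → Bool) : negt (negt r) = r := by
  funext i; simp [negt]

lemma wt_le {k : ℕ} (r : Fin k → Bool) : wt r ≤ k := by
  have := Finset.card_filter_le (Finset.univ : Finset (Fin k)) (fun i => r i = true)
  simpa [wt] using this

lemma wt_add_wt_negt {k : ℕ} (r : Fin k → Bool) : wt r + wt (negt r) = k := by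
  classical
  have h := Finset.card_filter_add_card_filter_not
    (s := (Finset.univ : Finset (Fin k))) (p := fun i => r i = true)
  have h2 : (Finset.univ.filter fun i => ¬ r i = true) =
      (Finset.univ.filter fun i => negt r i = true) := by
    apply Finset.filter_congr; intro i _; simp [negt]
  rw [h2] at h
  simpa [wt] using h

lemma wt_negt_int {k : ℕ} (r : Fin k → Bool) :
    ((k : ℤ) - 2 * (wt (negt r) : ℤ)) = -((k : ℤ) - 2 * (wt r : ℤ)) := by
  have := wt_add_wt_negt r
  have : (wt r : ℤ) + (wt (negt r) : ℤ) = k := by exact_mod_cast this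
  linarith

lemma sum_filter_wt (k : ℕ) (b : ℕ) :
    (Finset.univ.filter fun r : Fin k → Bool => wt r = b).card = k.choose b := by
  classical
  have hpc : (Finset.powersetCard b (Finset.univ : Finset (Fin k))).card = k.choose b := by
    simp [Finset.card_powersetCard]
  rw [← hpc]
  apply Finset.card_bij (fun r _ => Finset.univ.filter fun i => r i = true)
  · intro r hr
    rw [Finset.mem_powersetCard]
    refine ⟨Finset.filter_subset _ _, ?_⟩
    simpa [wt] using (Finset.mem_filter.mp hr).2
  · intro r hr s hs h
    funext i
    have : (i ∈ Finset.univ.filter fun j => r j = true) ↔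
        (i ∈ Finset.univ.filter fun j => s j = true) := by rw [h]
    simp only [Finset.mem_filter, Finset.mem_univ, true_and] at this
    cases hri : r i <;> cases hsi : s i <;> simp_all
  · intro t ht
    rw [Finset.mem_powersetCard] at ht
    refine ⟨fun i => decide (i ∈ t), ?_, ?_⟩
    · simp only [Finset.mem_filter, Finset.mem_univ, true_and]
      rw [← ht.2, wt]; congr 1; ext i; simp
    · ext i; simp

lemma mem_eigSub {I : Type*} [Fintype I] {M : Matrix I I ℂ} {μ : ℂ} {v : I → ℂ} :
    v ∈ eigSub M μ ↔ M.mulVec v = μ • v := Iff.rfl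

lemma mem_eigSub_D {k : ℕ} {ζ μ : ℂ} {v : (Fin k → Bool) → ℂ} :
    v ∈ eigSub (Dmat k ζ) μ ↔ ∀ r, ζ ^ ((k : ℤ) - 2 * (wt r : ℤ)) * v r = μ * v r := by
  rw [mem_eigSub, funext_iff]
  refine forall_congr' fun r => ?_
  rw [Dmat, Matrix.mulVec_diagonal]
  simp

lemma mem_eigSub_P {k : ℕ} {μ : ℂ} {v : (Fin k → Bool) → ℂ} :
    v ∈ eigSub (Pmat k) μ ↔ ∀ r, v (negt r) = μ * v r := by
  rw [mem_eigSub, funext_iff]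
  refine forall_congr' fun r => ?_
  simp [Pmat, Matrix.mulVec, dotProduct, Finset.sum_ite_eq']

lemma eig_eq_iff {n : ℕ} (hn : n ≠ 0) {ζ : ℂ} (hζ : IsPrimitiveRoot ζ (2 * n))
    (a : ℤ) (ℓ : ℕ) :
    ζ ^ a = ζ ^ ℓ ↔ a ≡ (ℓ : ℤ) [ZMOD ((2 * n : ℕ) : ℤ)] := by
  have h2n : (2 * n : ℕ) ≠ 0 := by positivity
  have hζ0 : ζ ≠ 0 := by
    intro h
    have := hζ.pow_eq_one
    rw [h, zero_pow h2n] at this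
    exact zero_ne_one this
  have key := hζ.zpow_eq_one_iff_dvd (a - (ℓ : ℤ))
  rw [Int.modEq_iff_dvd, ← dvd_neg, neg_sub, ← key,
    zpow_sub₀ hζ0, div_eq_one_iff_eq (zpow_ne_zero _ hζ0), zpow_natCast]

lemma dim_eq (k n ℓ : ℕ) (hk : 0 < k) (hn : n ≠ 0) (ζ μ : ℂ)
    (hζ : IsPrimitiveRoot ζ (2 * n)) (hμ : μ ^ 2 = 1)
    (hl2 : ((2 * n : ℕ) : ℤ) ∣ 2 * (ℓ : ℤ)) :
    Module.finrank ℂ ↥(eigSub (Dmat k ζ) (ζ ^ ℓ) ⊓ eigSub (Pmat k) μ) =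
      (Finset.univ.filter fun r : Fin k → Bool =>
        (((k : ℤ) - 2 * (wt r : ℤ)) ≡ (ℓ : ℤ) [ZMOD ((2 * n : ℕ) : ℤ)]) ∧
          r ⟨0, hk⟩ = false).card := by
  classical
  set i0 : Fin k := ⟨0, hk⟩
  set cong : (Fin k → Bool) → Prop :=
    fun r => ((k : ℤ) - 2 * (wt r : ℤ)) ≡ (ℓ : ℤ) [ZMOD ((2 * n : ℕ) : ℤ)] with hcong
  set T : Finset (Fin k → Bool) :=
    Finset.univ.filter (fun r => cong r ∧ r i0 = false) with hT
  set W := eigSub (Dmat k ζ) (ζ ^ ℓ) ⊓ eigSub (Pmat k) μ with hW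
  -- closure of cong under negt
  have hclosed : ∀ r, cong r → cong (negt r) := by
    intro r hr
    show ((k : ℤ) - 2 * (wt (negt r) : ℤ)) ≡ (ℓ : ℤ) [ZMOD ((2 * n : ℕ) : ℤ)]
    rw [wt_negt_int]
    have hr' : ((k : ℤ) - 2 * (wt r : ℤ)) ≡ (ℓ : ℤ) [ZMOD ((2 * n : ℕ) : ℤ)] := hr
    have h1 : -((k : ℤ) - 2 * (wt r : ℤ)) ≡ -(ℓ : ℤ) [ZMOD ((2 * n : ℕ) : ℤ)] :=
      hr'.neg
    refine h1.trans ?_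
    rw [Int.modEq_iff_dvd]
    simpa [two_mul] using hl2
  have hmemT : ∀ r, r ∈ T ↔ cong r ∧ r i0 = false := by
    intro r; simp [hT]
  have hTnotT : ∀ r, r ∈ T → negt r ∉ T := by
    intro r hr hcontra
    have h1 := ((hmemT r).mp hr).2
    have h2 := ((hmemT (negt r)).mp hcontra).2
    rw [negt] at h2
    simp [h1] at h2
  -- the restriction map
  let φ : W →ₗ[ℂ] (↑T → ℂ) :=
    { toFun := fun v t => v.1 t.1
      map_add' := fun v w => rfl
      map_smul' := fun c v => rfl }
  have hinj : Function.Injective φ := by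
    rw [injective_iff_map_eq_zero]
    intro v hv
    obtain ⟨hD, hP⟩ := Submodule.mem_inf.mp v.2
    rw [mem_eigSub_D] at hD
    rw [mem_eigSub_P] at hP
    have hnotS : ∀ r, ¬ cong r → v.1 r = 0 := by
      intro r hr
      have h1 := hD r
      have h2 : (ζ ^ ((k : ℤ) - 2 * (wt r : ℤ)) - ζ ^ ℓ) * v.1 r = 0 := by
        rw [sub_mul, h1, sub_self]
      rcases mul_eq_zero.mp h2 with h | h
      · exact absurd ((eig_eq_iff hn hζ _ ℓ).mp (sub_eq_zero.mp h)) hr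
      · exact h
    have hzT : ∀ r (h : r ∈ T), v.1 r = 0 := by
      intro r h
      exact congrFun hv ⟨r, h⟩
    apply Subtype.ext
    funext r
    show v.1 r = 0
    by_cases hc : cong r
    · cases hri : r i0
      · exact hzT r ((hmemT r).mpr ⟨hc, hri⟩)
      · have hnT : negt r ∈ T := by
          refine (hmemT _).mpr ⟨hclosed r hc, ?_⟩
          simp [negt, hri]
        have : v.1 (negt (negt r)) = μ * v.1 (negt r) := hP (negt r)
        rw [negt_negt, hzT _ hnT, mul_zero] at this
        exact this
    · exact hnotS r hc
  have hsurj : Function.Surjective φ := by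
    intro f
    set v : (Fin k → Bool) → ℂ :=
      fun r => if h : r ∈ T then f ⟨r, h⟩
        else if h' : negt r ∈ T then μ * f ⟨negt r, h'⟩ else 0 with hv
    have hvT : ∀ r (h : r ∈ T), v r = f ⟨r, h⟩ := by
      intro r h; simp [hv, h]
    have hvN : ∀ r (h1 : r ∉ T) (h2 : negt r ∈ T), v r = μ * f ⟨negt r, h2⟩ := by
      intro r h1 h2; simp [hv, h1, h2]
    have hv0 : ∀ r, r ∉ T → negt r ∉ T → v r = 0 := by
      intro r h1 h2; simp [hv, h1, h2]
    have hvmem : v ∈ W := by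
      rw [hW]
      rw [Submodule.mem_inf]
      constructor
      · rw [mem_eigSub_D]
        intro r
        by_cases hc : cong r
        · rw [(eig_eq_iff hn hζ _ ℓ).mpr hc]
        · have h1 : r ∉ T := fun h => hc ((hmemT r).mp h).1
          have h2 : negt r ∉ T := by
            intro h
            exact hc (by simpa [negt_negt] using hclosed _ ((hmemT _).mp h).1)
          rw [hv0 r h1 h2, mul_zero, mul_zero]
      · rw [mem_eigSub_P]
        intro r
        by_cases h1 : r ∈ T
        · have h2 : negt r ∉ T := hTnotT r h1
          have h3 : negt (negt r) ∈ T := by rw [negt_negt]; exact h1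
          rw [hvN (negt r) h2 h3, hvT r h1]
          congr 1
          exact congrArg f (Subtype.ext (negt_negt r))
        · by_cases h2 : negt r ∈ T
          · rw [hvT (negt r) h2, hvN r h1 h2, ← mul_assoc, ← sq, hμ, one_mul]
          · have h3 : negt (negt r) ∉ T := by rw [negt_negt]; exact h1
            rw [hv0 r h1 h2, hv0 (negt r) h2 h3, mul_zero]
    refine ⟨⟨v, hvmem⟩, ?_⟩
    funext t
    exact hvT t.1 t.2
  have e : W ≃ₗ[ℂ] (↑T → ℂ) := LinearEquiv.ofBijective φ ⟨hinj, hsurj⟩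
  rw [e.finrank_eq, Module.finrank_fintype_fun_eq_card, Fintype.card_coe]

lemma cong_negt (k n ℓ : ℕ) (hl2 : ((2 * n : ℕ) : ℤ) ∣ 2 * (ℓ : ℤ)) (r : Fin k → Bool)
    (hr : ((k : ℤ) - 2 * (wt r : ℤ)) ≡ (ℓ : ℤ) [ZMOD ((2 * n : ℕ) : ℤ)]) :
    ((k : ℤ) - 2 * (wt (negt r) : ℤ)) ≡ (ℓ : ℤ) [ZMOD ((2 * n : ℕ) : ℤ)] := by
  rw [wt_negt_int]
  refine hr.neg.trans ?_
  rw [Int.modEq_iff_dvd]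
  simpa [two_mul] using hl2

lemma two_mul_card_filter {k : ℕ} (hk : 0 < k) (p : (Fin k → Bool) → Prop)
    [DecidablePred p] (hcl : ∀ r, p r → p (negt r)) :
    2 * (Finset.univ.filter fun r => p r ∧ r ⟨0, hk⟩ = false).card =
      (Finset.univ.filter p).card := by
  classical
  set i0 : Fin k := ⟨0, hk⟩
  have hsplit := Finset.card_filter_add_card_filter_not
    (s := Finset.univ.filter p) (p := fun r => r i0 = false)
  have hT : (Finset.univ.filter p).filter (fun r => r i0 = false) =
      Finset.univ.filter fun r => p r ∧ r i0 = false := by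
    rw [Finset.filter_filter]
  have hcard : ((Finset.univ.filter p).filter fun r => ¬ r i0 = false).card =
      ((Finset.univ.filter p).filter fun r => r i0 = false).card := by
    apply Finset.card_bij (fun r _ => negt r)
    · intro r hr
      simp only [Finset.mem_filter, Finset.mem_univ, true_and] at hr ⊢
      refine ⟨hcl r hr.1, ?_⟩
      have := hr.2
      cases h : r i0 with
      | false => exact absurd h this
      | true => simp [negt, h]
    · intro r _ s _ h
      have := congrArg negt h
      rwa [negt_negt, negt_negt] at this
    · intro t ht
      simp only [Finset.mem_filter, Finset.mem_univ, true_and] at ht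
      refine ⟨negt t, ?_, negt_negt t⟩
      simp only [Finset.mem_filter, Finset.mem_univ, true_and]
      refine ⟨hcl t ht.1, ?_⟩
      simp [negt, ht.2]
  have hc2 : ((Finset.univ.filter p).filter fun r => r i0 = false).card =
      (Finset.univ.filter fun r => p r ∧ r i0 = false).card := by rw [hT]
  rw [← hc2, two_mul, ← hsplit, hcard]

lemma card_S (k n ℓ : ℕ) :
    (Finset.univ.filter fun r : Fin k → Bool =>
        ((k : ℤ) - 2 * (wt r : ℤ)) ≡ (ℓ : ℤ) [ZMOD ((2 * n : ℕ) : ℤ)]).card =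
      ∑ b ∈ Finset.range (k + 1),
        if ((k : ℤ) - 2 * (b : ℤ)) ≡ (ℓ : ℤ) [ZMOD ((2 * n : ℕ) : ℤ)]
          then k.choose b else 0 := by
  classical
  rw [Finset.card_eq_sum_card_fiberwise (f := wt) (t := Finset.range (k + 1))
    (fun r _ => Finset.mem_range.mpr (Nat.lt_succ_of_le (wt_le r)))]
  apply Finset.sum_congr rfl
  intro b _
  by_cases hc : ((k : ℤ) - 2 * (b : ℤ)) ≡ (ℓ : ℤ) [ZMOD ((2 * n : ℕ) : ℤ)]
  · rw [if_pos hc, ← sum_filter_wt k b]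
    congr 1
    ext r
    simp only [Finset.mem_filter, Finset.mem_univ, true_and]
    constructor
    · exact fun h => h.2
    · intro h
      exact ⟨by rw [h]; exact hc, h⟩
  · rw [if_neg hc]
    rw [Finset.card_eq_zero]
    ext r
    simp only [Finset.mem_filter, Finset.mem_univ, true_and, Finset.notMem_empty,
      iff_false, not_and]
    intro h1 h2
    rw [h2] at h1
    exact hc h1

/-- For `ℓ ∈ {0, n}` and `ε ∈ {1, −1}`, twice the dimension of the simultaneous
eigenspace `W = {v | D v = ζ^ℓ v, P v = ε·i^(ℓ−k) v}` equals
`Σ_{0 ≤ b ≤ k, k − 2b ≡ ℓ mod 2n} C(k,b)`. -/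
theorem stmt9 (k n : ℕ) (hk : 1 ≤ k) (hn : 2 ≤ n) (ζ : ℂ)
    (hζ : IsPrimitiveRoot ζ (2 * n)) (ℓ : ℕ) (hℓ : ℓ = 0 ∨ ℓ = n)
    (ε : ℂ) (hε : ε = 1 ∨ ε = -1) :
    2 * Module.finrank ℂ
        ↥(eigSub (Dmat k ζ) (ζ ^ ℓ) ⊓
          eigSub (Pmat k) (ε * Complex.I ^ ((ℓ : ℤ) - (k : ℤ)))) =
      ∑ b ∈ Finset.range (k + 1),
        if ((k : ℤ) - 2 * (b : ℤ)) ≡ (ℓ : ℤ) [ZMOD ((2 * n : ℕ) : ℤ)]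
          then k.choose b else 0 := by
  classical
  have hk0 : 0 < k := hk
  have hn0 : n ≠ 0 := by omega
  have hl2 : ((2 * n : ℕ) : ℤ) ∣ 2 * (ℓ : ℤ) := by
    rcases hℓ with h | h <;> subst h
    · simp
    · push_cast; exact dvd_refl _
  set μ : ℂ := ε * Complex.I ^ ((ℓ : ℤ) - (k : ℤ)) with hμdef
  have hε2 : ε ^ 2 = 1 := by rcases hε with h | h <;> subst h <;> norm_num
  have hIsq : (Complex.I ^ ((ℓ : ℤ) - (k : ℤ))) ^ 2 = (-1 : ℂ) ^ ((ℓ : ℤ) - (k : ℤ)) := by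
    rw [← zpow_natCast (Complex.I ^ ((ℓ : ℤ) - (k : ℤ))) 2, ← _root_.zpow_mul, mul_comm,
      _root_.zpow_mul]
    congr 1
    norm_num [zpow_two, Complex.I_mul_I]
  by_cases hpar : Even ((ℓ : ℤ) - (k : ℤ))
  · have hμ : μ ^ 2 = 1 := by
      have : μ ^ 2 = ε ^ 2 * (Complex.I ^ ((ℓ : ℤ) - (k : ℤ))) ^ 2 := by
        rw [hμdef]; ring
      rw [this, hε2, hIsq, hpar.neg_one_zpow, one_mul]
    rw [dim_eq k n ℓ hk0 hn0 ζ μ hζ hμ hl2]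
    rw [two_mul_card_filter hk0 _ (cong_negt k n ℓ hl2)]
    exact card_S k n ℓ
  · have hμ2 : μ ^ 2 = -1 := by
      have : μ ^ 2 = ε ^ 2 * (Complex.I ^ ((ℓ : ℤ) - (k : ℤ))) ^ 2 := by
        rw [hμdef]; ring
      rw [this, hε2, hIsq, (Int.not_even_iff_odd.mp hpar).neg_one_zpow, one_mul]
    have hbot : eigSub (Dmat k ζ) (ζ ^ ℓ) ⊓ eigSub (Pmat k) μ = ⊥ := by
      rw [eq_bot_iff]
      intro v hv
      obtain ⟨_, hP⟩ := Submodule.mem_inf.mp hv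
      rw [mem_eigSub_P] at hP
      rw [Submodule.mem_bot]
      funext r
      have h1 : v r = μ ^ 2 * v r := by
        calc v r = v (negt (negt r)) := by rw [negt_negt]
          _ = μ * v (negt r) := hP (negt r)
          _ = μ * (μ * v r) := by rw [hP r]
          _ = μ ^ 2 * v r := by ring
      rw [hμ2] at h1
      show v r = 0
      linear_combination h1 / 2
    have hrhs : ∀ b ∈ Finset.range (k + 1),
        (if ((k : ℤ) - 2 * (b : ℤ)) ≡ (ℓ : ℤ) [ZMOD ((2 * n : ℕ) : ℤ)]
          then (k.choose b : ℕ) else 0) = 0 := by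
      intro b _
      rw [if_neg]
      intro hc
      rw [Int.modEq_iff_dvd] at hc
      have h2 : (2 : ℤ) ∣ ((ℓ : ℤ) - ((k : ℤ) - 2 * (b : ℤ))) :=
        dvd_trans ⟨(n : ℤ), by push_cast; ring⟩ hc
      apply hpar
      obtain ⟨c, hcEq⟩ := h2
      exact ⟨c - (b : ℤ), by linarith⟩
    rw [Finset.sum_congr rfl hrhs, Finset.sum_const_zero, hbot, finrank_bot, mul_zero]
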